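/- If S ⊆ Mⁿ is definable and invariant under coordinatewise translation by Q (i.e., x + q ∈ S for every x ∈ S and q ∈ Qⁿ), then S is a finite Boolean combination of sets of the form {x ∈ Mⁿ : α₁x₁ + ⋯ + αₙxₙ + b ∈ Q} with α₁,…,αₙ ∈ F and b ∈ M. (Equivalently: the quotient sort M/Q, with the structure induced from the pair (M,Q), is a pure F-vector space.) -/

import Mathlib

set_option linter.unusedSectionVars false
set_option linter.unusedVariables false


open FirstOrder Language Set

/-- Functions of the language of ordered `F`-vector spaces with a predicate:
`+`, `-`, `0`, `1`, and scalar multiplication by each element of `F`. -/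
inductive LPFunc (F : Type) : ℕ → Type
  | add : LPFunc F 2
  | neg : LPFunc F 1
  | zero : LPFunc F 0
  | one : LPFunc F 0
  | smul : F → LPFunc F 1

/-- Relations: the order `<` and the unary predicate `Q`. -/
inductive LPRel : ℕ → Type
  | lt : LPRel 2
  | q : LPRel 1

/-- The language `L_P`. -/
def LP (F : Type) : Language := ⟨LPFunc F, LPRel⟩

variable (F M : Type) [Field F] [LinearOrder F] [IsStrictOrderedRing F] [AddCommGroup M] [LinearOrder M] [IsOrderedAddMonoid M] [Module F M]

/-- The natural `L_P`-structure on an ordered `F`-vector space `M` with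
distinguished element `one` and predicate `Q`. -/
def LPStruc (one : M) (Q : Set M) : (LP F).Structure M where
  funMap := fun {n} f x =>
    match n, f with
    | _, LPFunc.add => x 0 + x 1
    | _, LPFunc.neg => -(x 0)
    | _, LPFunc.zero => 0
    | _, LPFunc.one => one
    | _, LPFunc.smul c => c • x 0
  RelMap := fun {n} r x =>
    match n, r with
    | _, LPRel.lt => x 0 < x 1
    | _, LPRel.q => x 0 ∈ Q

/-- A subset of `N^n` is definable (with parameters from `N`). -/
def DefinableIn (L : Language) (N : Type) [L.Structure N] {n : ℕ} (S : Set (Fin n → N)) : Prop :=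
  Set.Definable (Set.univ : Set N) L S

/-- A subset of `N` is definable (with parameters from `N`). -/
def Definable1In (L : Language) (N : Type) [L.Structure N] (S : Set N) : Prop :=
  DefinableIn L N {x : Fin 1 → N | x 0 ∈ S}

/-- A function `N^n → N` is definable if its graph is definable. -/
def DefinableFunIn (L : Language) (N : Type) [L.Structure N] {n : ℕ}
    (f : (Fin n → N) → N) : Prop :=
  DefinableIn L N {x : Fin (n + 1) → N | x (Fin.last n) = f (fun i => x (Fin.castSucc i))}

/-- `S ⊆ N` is `P`-small: covered by the image of `Pⁿ` under a definable function. -/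
def SmallIn (L : Language) (N : Type) [L.Structure N] (P : Set N) (S : Set N) : Prop :=
  ∃ (n : ℕ) (f : (Fin n → N) → N), DefinableFunIn L N f ∧
    S ⊆ f '' {x : Fin n → N | ∀ i, x i ∈ P}

/-- Definability in the pair of ordered vector spaces. -/
def POVSDefinable (one : M) (Q : Set M) {n : ℕ} (S : Set (Fin n → M)) : Prop :=
  letI := LPStruc F M one Q
  DefinableIn (LP F) M S

/-- Definability of a unary set in the pair of ordered vector spaces. -/
def POVSDefinable1 (one : M) (Q : Set M) (S : Set M) : Prop :=
  letI := LPStruc F M one Q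
  Definable1In (LP F) M S

/-- Smallness in the pair of ordered vector spaces. -/
def POVSSmall (one : M) (Q : Set M) (S : Set M) : Prop :=
  letI := LPStruc F M one Q
  SmallIn (LP F) M Q S

/-- The embedding of `M` into `M ∪ {-∞, +∞}`. -/
def toExt (x : M) : WithBot (WithTop M) := ((x : WithTop M) : WithBot (WithTop M))

/-- The open interval `(a,b)` with endpoints from `M ∪ {-∞, +∞}`, as a subset of `M`. -/
def extIoo (a b : WithBot (WithTop M)) : Set M := {x : M | a < toExt M x ∧ toExt M x < b}

/-- The union of the cosets `c + Q` for `c ∈ C`. -/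
def cosetUnion (Q : Set M) (C : Finset M) : Set M := ⋃ c ∈ C, {x : M | x - c ∈ Q}

/-- A near-interval: a nonempty set of the form `(a,b) ∩ C` or `(a,b) \ C`, where
`a < b` in `M ∪ {-∞,+∞}` and `C` is a finite union of cosets of `Q`. -/
def NearInterval (Q : Set M) (S : Set M) : Prop :=
  S.Nonempty ∧ ∃ (a b : WithBot (WithTop M)) (C : Finset M), a < b ∧
    (S = extIoo M a b ∩ cosetUnion M Q C ∨ S = extIoo M a b \ cosetUnion M Q C)
/-- Finite Boolean combinations of sets from a family `B`. -/
inductive BoolComb {α : Type} (B : Set (Set α)) : Set α → Prop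
  | basic {s : Set α} : s ∈ B → BoolComb B s
  | univ : BoolComb B Set.univ
  | compl {s : Set α} : BoolComb B s → BoolComb B sᶜ
  | inter {s t : Set α} : BoolComb B s → BoolComb B t → BoolComb B (s ∩ t)


section AuxA

lemma sections_forall_exists {α : Type} (L : List (List α)) (p : α → Prop) :
    (∀ c ∈ L, ∃ a ∈ c, p a) ↔ ∃ s ∈ L.sections, ∀ a ∈ s, p a := by
  induction L with
  | nil =>
      constructor
      · intro _; exact ⟨[], by simp [List.sections], by simp⟩
      · intro _ c hc; exact absurd hc (List.not_mem_nil)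
  | cons c L ih =>
      constructor
      · rintro h
        obtain ⟨a, ha, hpa⟩ := h c (List.mem_cons_self)
        obtain ⟨s, hs, hps⟩ := ih.1 fun c' hc' => h c' (List.mem_cons_of_mem _ hc')
        refine ⟨a :: s, ?_, ?_⟩
        · rw [List.mem_sections] at hs ⊢
          exact List.Forall₂.cons ha hs
        · intro a' ha'
          rcases List.mem_cons.1 ha' with rfl | h'
          · exact hpa
          · exact hps a' h'
      · rintro ⟨s, hs, hps⟩
        rw [List.mem_sections] at hs
        cases hs with
        | cons ha hs' =>
          intro c' hc'
          rcases List.mem_cons.1 hc' with rfl | h'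
          · exact ⟨_, ha, hps _ (List.mem_cons_self)⟩
          · exact ih.2 ⟨_, List.mem_sections.2 hs',
              fun a' ha' => hps _ (List.mem_cons_of_mem _ ha')⟩ c' h'

lemma list_exists_max {M : Type} [LinearOrder M] :
    ∀ (l : List M), l ≠ [] → ∃ m, m ∈ l ∧ ∀ x ∈ l, x ≤ m := by
  intro l
  induction l with
  | nil => intro h; exact absurd rfl h
  | cons a l ih =>
      intro _
      rcases eq_or_ne l [] with rfl | hl
      · exact ⟨a, by simp⟩
      · obtain ⟨m, hm, hmax⟩ := ih hl
        refine ⟨max a m, ?_, ?_⟩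
        · rcases le_total a m with h | h
          · simp only [max_eq_right h]; exact List.mem_cons_of_mem _ hm
          · simp only [max_eq_left h]; exact (List.mem_cons_self)
        · intro x hx
          rcases List.mem_cons.1 hx with rfl | hx
          · exact le_max_left _ _
          · exact le_trans (hmax x hx) (le_max_right _ _)

lemma list_exists_min {M : Type} [LinearOrder M] :
    ∀ (l : List M), l ≠ [] → ∃ m, m ∈ l ∧ ∀ x ∈ l, m ≤ x := by
  intro l hl
  obtain ⟨m, hm, hmax⟩ := list_exists_max (M := Mᵒᵈ) l hl
  exact ⟨m, hm, hmax⟩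

end AuxA
section AuxB
variable {F M : Type} [Field F] [LinearOrder F] [IsStrictOrderedRing F] [AddCommGroup M] [LinearOrder M] [IsOrderedAddMonoid M] [Module F M]
variable {ι κ : Type} [Fintype ι] [DecidableEq ι] [Fintype κ] [DecidableEq κ]

/-- affine evaluation -/
def aff (c : ι → F) (b : M) (x : ι → M) : M := (∑ i, c i • x i) + b

inductive Knd | q | e | l
deriving DecidableEq

/-- a literal: (kind, coefficients, constant, polarity) -/
abbrev Lit (ι F M : Type) := (Knd × (ι → F) × M) × Bool

def atomSet (Q : Set M) (k : Knd) (c : ι → F) (b : M) : Set (ι → M) :=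
  match k with
  | .q => {x | aff c b x ∈ Q}
  | .e => {x | aff c b x = 0}
  | .l => {x | aff c b x < 0}

def litSet (Q : Set M) (l : Lit ι F M) : Set (ι → M) :=
  if l.2 then atomSet Q l.1.1 l.1.2.1 l.1.2.2 else (atomSet Q l.1.1 l.1.2.1 l.1.2.2)ᶜ

def cellSet (Q : Set M) (c : List (Lit ι F M)) : Set (ι → M) := {x | ∀ l ∈ c, x ∈ litSet Q l}

def dnfSet (Q : Set M) (d : List (List (Lit ι F M))) : Set (ι → M) :=
  {x | ∃ c ∈ d, x ∈ cellSet Q c}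

def IsDNF (F : Type) [Field F] [LinearOrder F] [IsStrictOrderedRing F] [Module F M] (Q : Set M) (S : Set (ι → M)) : Prop :=
  ∃ d : List (List (Lit ι F M)), S = dnfSet Q d

variable {Q : Set M}

lemma cellSet_append {c₁ c₂ : List (Lit ι F M)} :
    cellSet Q (c₁ ++ c₂) = cellSet Q c₁ ∩ cellSet Q c₂ := by
  ext x; simp [cellSet, or_imp, forall_and]

lemma isDNF_atom (k : Knd) (c : ι → F) (b : M) : IsDNF F Q (atomSet Q k c b) := by
  refine ⟨[ [((k, c, b), true)] ], Set.ext fun x => ?_⟩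
  constructor
  · intro hx
    refine ⟨_, List.mem_singleton_self _, fun l hl => ?_⟩
    rw [List.mem_singleton] at hl
    subst hl
    simpa [litSet] using hx
  · rintro ⟨cc, hcc, hx⟩
    rw [List.mem_singleton] at hcc
    subst hcc
    simpa [litSet] using hx _ (List.mem_singleton_self _)

lemma IsDNF.inter {S T : Set (ι → M)} (hS : IsDNF F Q S) (hT : IsDNF F Q T) : IsDNF F Q (S ∩ T) := by
  obtain ⟨d, rfl⟩ := hS; obtain ⟨e, rfl⟩ := hT
  refine ⟨d.flatMap fun c => e.map (c ++ ·), ?_⟩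
  ext x
  simp only [Set.mem_inter_iff, dnfSet, Set.mem_setOf_eq, List.mem_flatMap, List.mem_map]
  constructor
  · rintro ⟨⟨c, hc, hxc⟩, ⟨c', hc', hxc'⟩⟩
    exact ⟨c ++ c', ⟨c, hc, c', hc', rfl⟩, by rw [cellSet_append]; exact ⟨hxc, hxc'⟩⟩
  · rintro ⟨_, ⟨c, hc, c', hc', rfl⟩, hx⟩
    rw [cellSet_append] at hx
    exact ⟨⟨c, hc, hx.1⟩, ⟨c', hc', hx.2⟩⟩

lemma IsDNF.union {S T : Set (ι → M)} (hS : IsDNF F Q S) (hT : IsDNF F Q T) : IsDNF F Q (S ∪ T) := by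
  obtain ⟨d, rfl⟩ := hS; obtain ⟨e, rfl⟩ := hT
  refine ⟨d ++ e, ?_⟩
  ext x
  simp only [Set.mem_union, dnfSet, Set.mem_setOf_eq, List.mem_append]
  constructor
  · rintro (⟨c, hc, hx⟩ | ⟨c, hc, hx⟩)
    · exact ⟨c, Or.inl hc, hx⟩
    · exact ⟨c, Or.inr hc, hx⟩
  · rintro ⟨c, hc | hc, hx⟩
    · exact Or.inl ⟨c, hc, hx⟩
    · exact Or.inr ⟨c, hc, hx⟩

lemma isDNF_univ : IsDNF F Q (Set.univ : Set (ι → M)) := ⟨[ [] ], by ext x; simp [dnfSet, cellSet]⟩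

lemma isDNF_empty : IsDNF F Q (∅ : Set (ι → M)) := ⟨[], by ext x; simp [dnfSet]⟩

def negLit (l : Lit ι F M) : Lit ι F M := (l.1, !l.2)

lemma litSet_negLit (l : Lit ι F M) : litSet Q (negLit l) = (litSet Q l)ᶜ := by
  rcases l with ⟨a, b⟩; cases b <;> simp [negLit, litSet]

lemma IsDNF.compl {S : Set (ι → M)} (hS : IsDNF F Q S) : IsDNF F Q Sᶜ := by
  obtain ⟨d, rfl⟩ := hS
  refine ⟨(d.map fun c => c.map negLit).sections, ?_⟩
  ext x
  simp only [Set.mem_compl_iff, dnfSet, cellSet, Set.mem_setOf_eq, not_exists, not_and,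
    not_forall]
  rw [← sections_forall_exists (p := fun l => x ∈ litSet Q l)]
  constructor
  · intro h c hc
    simp only [List.mem_map] at hc
    obtain ⟨c₀, hc₀, rfl⟩ := hc
    obtain ⟨l, hl, hxl⟩ := h c₀ hc₀
    refine ⟨negLit l, List.mem_map_of_mem hl, ?_⟩
    rw [litSet_negLit]
    exact hxl
  · intro h c₀ hc₀
    obtain ⟨l', hl', hxl'⟩ := h (c₀.map negLit) (List.mem_map_of_mem hc₀)
    simp only [List.mem_map] at hl'
    obtain ⟨l, hl, rfl⟩ := hl'
    rw [litSet_negLit] at hxl'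
    exact ⟨l, hl, hxl'⟩

/-- reindexing coefficients along a map of index types -/
def pushc (r : ι → κ) (c : ι → F) : κ → F := fun j => ∑ i ∈ Finset.univ.filter (fun i => r i = j), c i

lemma aff_pushc (r : ι → κ) (c : ι → F) (b : M) (x : κ → M) :
    aff (pushc r c) b x = aff c b (x ∘ r) := by
  unfold aff pushc
  congr 1
  simp only [Function.comp_apply]
  rw [← Finset.sum_fiberwise_of_maps_to (g := r) (fun i _ => Finset.mem_univ (r i))
    (fun i => c i • x (r i))]
  refine Finset.sum_congr rfl fun j _ => ?_
  rw [Finset.sum_smul]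
  refine Finset.sum_congr rfl fun i hi => ?_
  simp only [Finset.mem_filter] at hi
  rw [hi.2]

def mapLit (r : ι → κ) (l : Lit ι F M) : Lit κ F M := ((l.1.1, pushc r l.1.2.1, l.1.2.2), l.2)

lemma litSet_mapLit (r : ι → κ) (l : Lit ι F M) (x : κ → M) :
    x ∈ litSet Q (mapLit r l) ↔ (x ∘ r) ∈ litSet Q l := by
  rcases l with ⟨⟨k, c, b⟩, pol⟩
  have : ∀ kk : Knd, (x ∈ atomSet Q kk (pushc r c) b ↔ (x ∘ r) ∈ atomSet Q kk c b) := by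
    intro kk; cases kk <;> simp [atomSet, aff_pushc]
  cases pol <;> simp [mapLit, litSet, this]

lemma isDNF_comp_map {d : List (List (Lit ι F M))} (r : ι → κ) :
    IsDNF F Q {x : κ → M | (x ∘ r) ∈ dnfSet Q d} := by
  refine ⟨d.map fun c => c.map (mapLit r), ?_⟩
  ext x
  simp only [Set.mem_setOf_eq, dnfSet, List.mem_map]
  constructor
  · rintro ⟨c, hc, hx⟩
    refine ⟨c.map (mapLit r), ⟨c, hc, rfl⟩, ?_⟩
    intro l' hl'
    simp only [List.mem_map] at hl'
    obtain ⟨l, hl, rfl⟩ := hl'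
    exact (litSet_mapLit r l x).2 (hx l hl)
  · rintro ⟨_, ⟨c, hc, rfl⟩, hx⟩
    refine ⟨c, hc, fun l hl => ?_⟩
    exact (litSet_mapLit r l x).1 (hx _ (List.mem_map_of_mem hl))

end AuxB
section AuxC
variable {F M : Type} [Field F] [LinearOrder F] [IsStrictOrderedRing F] [AddCommGroup M] [LinearOrder M] [IsOrderedAddMonoid M] [Module F M]
variable {Q : Submodule F M}

lemma exists_coset_Ioo (hQdense : ∀ a b : M, a < b → ∃ q ∈ Q, a < q ∧ q < b)
    (t a b : M) (h : a < b) : ∃ y, a < y ∧ y < b ∧ y - t ∈ Q := by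
  obtain ⟨q, hq, h1, h2⟩ := hQdense (a - t) (b - t) (sub_lt_sub_right h t)
  refine ⟨q + t, sub_lt_iff_lt_add.1 h1, lt_sub_iff_add_lt.1 h2, ?_⟩
  simpa using hq

lemma exists_coset_Ioo_avoid (hQdense : ∀ a b : M, a < b → ∃ q ∈ Q, a < q ∧ q < b)
    (t : M) (bad : List M) :
    ∀ a b : M, a < b → ∃ y, a < y ∧ y < b ∧ y - t ∈ Q ∧ y ∉ bad := by
  induction bad with
  | nil =>
      intro a b h
      obtain ⟨y, h1, h2, h3⟩ := exists_coset_Ioo hQdense t a b h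
      exact ⟨y, h1, h2, h3, List.not_mem_nil⟩
  | cons p bad ih =>
      intro a b h
      obtain ⟨y, h1, h2, h3, h4⟩ := ih a b h
      by_cases hyp : y = p
      · subst hyp
        obtain ⟨y₂, g1, g2, g3, g4⟩ := ih a y h1
        refine ⟨y₂, g1, lt_trans g2 h2, g3, ?_⟩
        intro hmem
        rcases List.mem_cons.1 hmem with rfl | hmem
        · exact absurd g2 (lt_irrefl _)
        · exact g4 hmem
      · refine ⟨y, h1, h2, h3, ?_⟩
        intro hmem
        rcases List.mem_cons.1 hmem with rfl | hmem
        · exact hyp rfl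
        · exact h4 hmem

lemma exists_fresh_coset (hQproper : (Q : Set M) ≠ Set.univ) (bad : List M) :
    ∃ t : M, ∀ s ∈ bad, t - s ∉ Q := by
  classical
  have hv : ∃ v : M, v ∉ Q := by
    by_contra h
    push_neg at h
    exact hQproper (Set.eq_univ_of_forall h)
  obtain ⟨v, hv⟩ := hv
  have hsub : ∀ s : M, Set.Subsingleton {α : F | α • v - s ∈ Q} := by
    intro s α hα β hβ
    by_contra hne
    have h1 : (α - β) • v ∈ Q := by
      have h2 := Q.sub_mem hα hβ
      have h3 : α • v - s - (β • v - s) = (α - β) • v := by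
        rw [sub_smul]; abel
      rwa [h3] at h2
    have h4 : v ∈ Q := by
      have h5 := Q.smul_mem (α - β)⁻¹ h1
      rwa [inv_smul_smul₀ (sub_ne_zero.2 hne)] at h5
    exact hv h4
  have hfin : (⋃ s ∈ bad, {α : F | α • v - s ∈ Q}).Finite :=
    Set.Finite.biUnion bad.finite_toSet (fun s _ => Set.Subsingleton.finite (hsub s))
  obtain ⟨α, hα⟩ := hfin.infinite_compl.nonempty
  refine ⟨α • v, fun s hs hmem => hα ?_⟩
  exact Set.mem_biUnion hs hmem

inductive NT | lt | le | gt | ge | eq | ne | inQ | ninQ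
deriving DecidableEq

def NT.subst : NT → Bool
  | .le => true
  | .ge => true
  | .eq => true
  | _ => false

def holds (Q : Submodule F M) (y : M) : NT × M → Prop
  | (.lt, v) => y < v
  | (.le, v) => y ≤ v
  | (.gt, v) => v < y
  | (.ge, v) => v ≤ y
  | (.eq, v) => y = v
  | (.ne, v) => y ≠ v
  | (.inQ, v) => y - v ∈ Q
  | (.ninQ, v) => y - v ∉ Q

lemma core_qe (one : M) (hone : (0 : M) < one)
    (hQproper : (Q : Set M) ≠ Set.univ)
    (hQdense : ∀ a b : M, a < b → ∃ q ∈ Q, a < q ∧ q < b)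
    (C : List (NT × M)) :
    (∃ y, ∀ p ∈ C, holds Q y p) ↔
      ((∃ p ∈ C, p.1.subst = true ∧ ∀ q ∈ C, holds Q p.2 q) ∨
       ((∀ p ∈ C, p.1 ≠ NT.eq) ∧
        (∀ p ∈ C, ∀ q ∈ C, (p.1 = NT.gt ∨ p.1 = NT.ge) → (q.1 = NT.lt ∨ q.1 = NT.le) →
          p.2 < q.2) ∧
        (∀ p ∈ C, ∀ q ∈ C, p.1 = NT.inQ → q.1 = NT.inQ → p.2 - q.2 ∈ Q) ∧
        (∀ p ∈ C, ∀ q ∈ C, p.1 = NT.inQ → q.1 = NT.ninQ → p.2 - q.2 ∉ Q))) := by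
  classical
  constructor
  · rintro ⟨y, hy⟩
    by_cases hc : ∃ p ∈ C, p.1.subst = true ∧ p.2 = y
    · obtain ⟨p, hp, hps, hpy⟩ := hc
      exact Or.inl ⟨p, hp, hps, fun q hq => by rw [hpy]; exact hy q hq⟩
    · push_neg at hc
      refine Or.inr ⟨?_, ?_, ?_, ?_⟩
      · rintro ⟨k, v⟩ hp hk
        simp only at hk
        subst hk
        have h1 : y = v := hy _ hp
        exact hc _ hp rfl (h1 ▸ rfl)
      · rintro ⟨k, v⟩ hp ⟨k', v'⟩ hq hk hk'
        simp only at hk hk' ⊢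
        have hlow : v < y := by
          rcases hk with rfl | rfl
          · exact hy _ hp
          · exact lt_of_le_of_ne (hy _ hp) fun h => hc _ hp rfl h
        have hup : y < v' := by
          rcases hk' with rfl | rfl
          · exact hy _ hq
          · exact lt_of_le_of_ne (hy _ hq) (fun h => hc _ hq rfl h.symm)
        exact lt_trans hlow hup
      · rintro ⟨k, v⟩ hp ⟨k', v'⟩ hq hk hk'
        simp only at hk hk' ⊢
        subst hk; subst hk'
        have h1 : y - v ∈ Q := hy _ hp
        have h2 : y - v' ∈ Q := hy _ hq
        have := Q.sub_mem h2 h1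
        rwa [sub_sub_sub_cancel_left] at this
      · rintro ⟨k, v⟩ hp ⟨k', v'⟩ hq hk hk'
        simp only at hk hk' ⊢
        subst hk; subst hk'
        intro hvv
        have h1 : y - v ∈ Q := hy _ hp
        have h2 : y - v' ∉ Q := hy _ hq
        exact h2 (by rw [← sub_add_sub_cancel y v v']; exact Q.add_mem h1 hvv)
  · rintro (⟨p, hp, _, hall⟩ | ⟨hne, hord, hqq, hqn⟩)
    · exact ⟨p.2, hall⟩
    · set lowers := C.filterMap
        (fun p => if p.1 = NT.gt ∨ p.1 = NT.ge then some p.2 else none) with hlows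
      set uppers := C.filterMap
        (fun p => if p.1 = NT.lt ∨ p.1 = NT.le then some p.2 else none) with hups
      set nes := C.filterMap (fun p => if p.1 = NT.ne then some p.2 else none) with hnes
      set ninQs := C.filterMap (fun p => if p.1 = NT.ninQ then some p.2 else none) with hnins
      have hmeml : ∀ v, v ∈ lowers ↔ ∃ p ∈ C, (p.1 = NT.gt ∨ p.1 = NT.ge) ∧ p.2 = v := by
        intro v
        rw [hlows, List.mem_filterMap]
        constructor
        · rintro ⟨p, hp, hv⟩
          by_cases h : p.1 = NT.gt ∨ p.1 = NT.ge
          · rw [if_pos h] at hv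
            exact ⟨p, hp, h, Option.some_injective _ hv⟩
          · rw [if_neg h] at hv; exact absurd hv (by simp)
        · rintro ⟨p, hp, h, rfl⟩
          exact ⟨p, hp, if_pos h⟩
      have hmemu : ∀ v, v ∈ uppers ↔ ∃ p ∈ C, (p.1 = NT.lt ∨ p.1 = NT.le) ∧ p.2 = v := by
        intro v
        rw [hups, List.mem_filterMap]
        constructor
        · rintro ⟨p, hp, hv⟩
          by_cases h : p.1 = NT.lt ∨ p.1 = NT.le
          · rw [if_pos h] at hv
            exact ⟨p, hp, h, Option.some_injective _ hv⟩
          · rw [if_neg h] at hv; exact absurd hv (by simp)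
        · rintro ⟨p, hp, h, rfl⟩
          exact ⟨p, hp, if_pos h⟩
      have hmemne : ∀ v, v ∈ nes ↔ ∃ p ∈ C, p.1 = NT.ne ∧ p.2 = v := by
        intro v
        rw [hnes, List.mem_filterMap]
        constructor
        · rintro ⟨p, hp, hv⟩
          by_cases h : p.1 = NT.ne
          · rw [if_pos h] at hv
            exact ⟨p, hp, h, Option.some_injective _ hv⟩
          · rw [if_neg h] at hv; exact absurd hv (by simp)
        · rintro ⟨p, hp, h, rfl⟩
          exact ⟨p, hp, if_pos h⟩
      have hmemnin : ∀ v, v ∈ ninQs ↔ ∃ p ∈ C, p.1 = NT.ninQ ∧ p.2 = v := by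
        intro v
        rw [hnins, List.mem_filterMap]
        constructor
        · rintro ⟨p, hp, hv⟩
          by_cases h : p.1 = NT.ninQ
          · rw [if_pos h] at hv
            exact ⟨p, hp, h, Option.some_injective _ hv⟩
          · rw [if_neg h] at hv; exact absurd hv (by simp)
        · rintro ⟨p, hp, h, rfl⟩
          exact ⟨p, hp, if_pos h⟩
      have hbounds : ∃ a b : M, a < b ∧ (∀ l ∈ lowers, l ≤ a) ∧ (∀ u ∈ uppers, b ≤ u) := by
        rcases eq_or_ne lowers [] with hl | hl
        · rcases eq_or_ne uppers [] with hu | hu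
          · exact ⟨0, one, hone, by rw [hl]; simp, by rw [hu]; simp⟩
          · obtain ⟨mU, hmU, hminU⟩ := list_exists_min uppers hu
            exact ⟨mU - one, mU, sub_lt_self _ hone, by rw [hl]; simp,
              fun u hu' => hminU u hu'⟩
        · obtain ⟨mL, hmL, hmaxL⟩ := list_exists_max lowers hl
          rcases eq_or_ne uppers [] with hu | hu
          · exact ⟨mL, mL + one, lt_add_of_pos_right _ hone, hmaxL, by rw [hu]; simp⟩
          · obtain ⟨mU, hmU, hminU⟩ := list_exists_min uppers hu
            obtain ⟨p, hp, hpk, hpv⟩ := (hmeml mL).1 hmL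
            obtain ⟨q, hq, hqk, hqv⟩ := (hmemu mU).1 hmU
            refine ⟨mL, mU, ?_, hmaxL, hminU⟩
            rw [← hpv, ← hqv]
            exact hord p hp q hq hpk hqk
      obtain ⟨a, b, hab, hla, hub⟩ := hbounds
      have hbase : ∃ t : M, (∀ p ∈ C, p.1 = NT.inQ → t - p.2 ∈ Q) ∧
          (∀ p ∈ C, p.1 = NT.ninQ → t - p.2 ∉ Q) := by
        by_cases hex : ∃ p ∈ C, p.1 = NT.inQ
        · obtain ⟨p₀, hp₀, hk₀⟩ := hex
          exact ⟨p₀.2, fun p hp hk => hqq p₀ hp₀ p hp hk₀ hk,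
            fun p hp hk => hqn p₀ hp₀ p hp hk₀ hk⟩
        · obtain ⟨t, ht⟩ := exists_fresh_coset (Q := Q) hQproper ninQs
          refine ⟨t, fun p hp hk => absurd ⟨p, hp, hk⟩ hex, fun p hp hk => ?_⟩
          exact ht p.2 ((hmemnin p.2).2 ⟨p, hp, hk, rfl⟩)
      obtain ⟨t, htq, htn⟩ := hbase
      obtain ⟨y, hya, hyb, hyt, hyne⟩ := exists_coset_Ioo_avoid hQdense t nes a b hab
      refine ⟨y, ?_⟩
      rintro ⟨k, v⟩ hp
      cases k with
      | lt =>
          have : b ≤ v := hub v ((hmemu v).2 ⟨_, hp, Or.inl rfl, rfl⟩)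
          exact lt_of_lt_of_le hyb this
      | le =>
          have : b ≤ v := hub v ((hmemu v).2 ⟨_, hp, Or.inr rfl, rfl⟩)
          exact le_of_lt (lt_of_lt_of_le hyb this)
      | gt =>
          have : v ≤ a := hla v ((hmeml v).2 ⟨_, hp, Or.inl rfl, rfl⟩)
          exact lt_of_le_of_lt this hya
      | ge =>
          have : v ≤ a := hla v ((hmeml v).2 ⟨_, hp, Or.inr rfl, rfl⟩)
          exact le_of_lt (lt_of_le_of_lt this hya)
      | eq => exact absurd rfl (hne _ hp)
      | ne =>
          intro h
          exact hyne (h ▸ (hmemne v).2 ⟨_, hp, rfl, rfl⟩)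
      | inQ =>
          have h1 : t - v ∈ Q := htq _ hp rfl
          have := Q.add_mem hyt h1
          rwa [sub_add_sub_cancel] at this
      | ninQ =>
          intro hyv
          refine htn _ hp rfl ?_
          have := Q.add_mem (Q.neg_mem hyt) hyv
          rwa [neg_sub, sub_add_sub_cancel] at this
  
end AuxC
section AuxE
variable {F M : Type} [Field F] [LinearOrder F] [IsStrictOrderedRing F] [AddCommGroup M] [LinearOrder M] [IsOrderedAddMonoid M] [Module F M]
  [PosSMulStrictMono F M]
variable {κ : Type} [Fintype κ] [DecidableEq κ]
variable {Q : Submodule F M}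

lemma smul_neg_iff_pos' {γ : F} (h : 0 < γ) (m : M) : γ • m < 0 ↔ m < 0 := by
  constructor
  · intro hm
    by_contra h'
    exact absurd (smul_nonneg h.le (not_lt.1 h')) (not_le.2 hm)
  · intro hm
    have := smul_lt_smul_of_pos_left hm h
    rwa [smul_zero] at this

lemma smul_neg_iff_neg' {γ : F} (h : γ < 0) (m : M) : γ • m < 0 ↔ 0 < m := by
  have h2 : γ • m = -((-γ) • m) := by rw [neg_smul, neg_neg]
  rw [h2, neg_lt, neg_zero]
  constructor
  · intro hm
    by_contra h'
    have h3 : (-γ) • m ≤ 0 := by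
      have := smul_nonneg (neg_pos.2 h).le (neg_nonneg.2 (not_lt.1 h'))
      rwa [smul_neg, neg_nonneg] at this
    exact absurd h3 (not_le.2 hm)
  · intro hm
    have := smul_lt_smul_of_pos_left hm (neg_pos.2 h)
    rwa [smul_zero] at this

lemma smul_eq_zero_iff' {γ : F} (h : γ ≠ 0) (m : M) : γ • m = 0 ↔ m = 0 := by
  constructor
  · intro hm
    have : γ⁻¹ • γ • m = γ⁻¹ • (0 : M) := by rw [hm]
    rwa [inv_smul_smul₀ h, smul_zero] at this
  · intro hm; rw [hm, smul_zero]

lemma aff_sub_eval (t s : (κ → F) × M) (x : κ → M) :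
    aff (t.1 - s.1) (t.2 - s.2) x = aff t.1 t.2 x - aff s.1 s.2 x := by
  unfold aff
  rw [Finset.sum_congr rfl (fun i _ => by rw [Pi.sub_apply, sub_smul]), Finset.sum_sub_distrib]
  abel

lemma aff_sub_eval' (c₁ c₂ : κ → F) (b₁ b₂ : M) (x : κ → M) :
    aff (c₁ - c₂) (b₁ - b₂) x = aff c₁ b₁ x - aff c₂ b₂ x :=
  aff_sub_eval (c₁, b₁) (c₂, b₂) x

lemma aff_elim (c : (κ ⊕ Unit) → F) (b : M) (x : κ → M) (y : M) :
    aff c b (Sum.elim x fun _ => y) = aff (c ∘ Sum.inl) b x + c (Sum.inr ()) • y := by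
  unfold aff
  rw [Fintype.sum_sum_type]
  rw [Fintype.sum_unique (fun u : Unit => c (Sum.inr u) • (Sum.elim x (fun _ => y)) (Sum.inr u))]
  simp only [Sum.elim_inr, Sum.elim_inl, Function.comp_apply]
  abel

/-- the normalized constraint type -/
def normT (k : Knd) (pol : Bool) (γpos : Bool) : NT :=
  match k, pol, γpos with
  | .l, true, true => .lt
  | .l, true, false => .gt
  | .l, false, true => .ge
  | .l, false, false => .le
  | .e, true, _ => .eq
  | .e, false, _ => .ne
  | .q, true, _ => .inQ
  | .q, false, _ => .ninQ

def normConstraint (l : Lit (κ ⊕ Unit) F M) : NT × (κ → F) × M :=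
  ((normT l.1.1 l.2 (decide (0 < l.1.2.1 (Sum.inr ())))),
    (fun i => (-(l.1.2.1 (Sum.inr ()))⁻¹) * l.1.2.1 (Sum.inl i)),
    (-(l.1.2.1 (Sum.inr ()))⁻¹) • l.1.2.2)

lemma aff_normTerm (c : (κ ⊕ Unit) → F) (b : M) (x : κ → M) :
    aff (fun i => (-(c (Sum.inr ()))⁻¹) * c (Sum.inl i)) ((-(c (Sum.inr ()))⁻¹) • b) x
      = (-(c (Sum.inr ()))⁻¹) • aff (c ∘ Sum.inl) b x := by
  unfold aff
  rw [smul_add, Finset.smul_sum]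
  congr 1
  exact Finset.sum_congr rfl fun i _ => by rw [mul_smul, Function.comp_apply]

lemma norm_bridge (l : Lit (κ ⊕ Unit) F M) (hγ : l.1.2.1 (Sum.inr ()) ≠ 0) (x : κ → M) (y : M) :
    (Sum.elim x fun _ => y) ∈ litSet (Q : Set M) l ↔
      holds Q y ((normConstraint l).1,
        aff (normConstraint l).2.1 (normConstraint l).2.2 x) := by
  rcases l with ⟨⟨k, c, b⟩, pol⟩
  simp only at hγ
  set γ := c (Sum.inr ()) with hγdef
  set A := aff (c ∘ Sum.inl) b x with hA
  have hT : aff (normConstraint ((k, c, b), pol)).2.1 (normConstraint ((k, c, b), pol)).2.2 x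
      = (-γ⁻¹) • A := by
    simp only [normConstraint]
    exact aff_normTerm c b x
  set T := (-γ⁻¹) • A with hTdef
  have hval : aff c b (Sum.elim x fun _ => y) = γ • (y - T) := by
    rw [aff_elim, hTdef, smul_sub, smul_smul, mul_neg, mul_inv_cancel₀ hγ, neg_smul, one_smul,
      sub_neg_eq_add]
    rw [← hA, ← hγdef]
    abel
  have hNT : (normConstraint ((k, c, b), pol)).1 = normT k pol (decide (0 < γ)) := rfl
  rw [hT]
  rcases lt_trichotomy γ 0 with hneg | hzero | hpos
  · have hd : decide (0 < γ) = false := by simp [not_lt_of_gt hneg, hneg, asymm hneg]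
    cases k <;> cases pol <;>
      simp only [hNT, hd, litSet, atomSet, normT, Set.mem_setOf_eq, Set.mem_compl_iff,
        if_true, if_false, Bool.false_eq_true, hval, holds]
    · exact not_congr (Q.smul_mem_iff hγ)
    · exact Q.smul_mem_iff hγ
    · rw [smul_eq_zero_iff' hγ, sub_eq_zero]
    · rw [smul_eq_zero_iff' hγ, sub_eq_zero]
    · rw [smul_neg_iff_neg' hneg, sub_pos]
      exact not_lt
    · rw [smul_neg_iff_neg' hneg, sub_pos]
  · exact absurd hzero hγ
  · have hd : decide (0 < γ) = true := by simp [hpos]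
    cases k <;> cases pol <;>
      simp only [hNT, hd, litSet, atomSet, normT, Set.mem_setOf_eq, Set.mem_compl_iff,
        if_true, if_false, Bool.false_eq_true, hval, holds]
    · exact not_congr (Q.smul_mem_iff hγ)
    · exact Q.smul_mem_iff hγ
    · rw [smul_eq_zero_iff' hγ, sub_eq_zero]
    · rw [smul_eq_zero_iff' hγ, sub_eq_zero]
    · rw [smul_neg_iff_pos' hpos, sub_neg]
      exact not_lt
    · rw [smul_neg_iff_pos' hpos, sub_neg]

def xlit (l : Lit (κ ⊕ Unit) F M) : Lit κ F M := ((l.1.1, l.1.2.1 ∘ Sum.inl, l.1.2.2), l.2)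

lemma zero_bridge (l : Lit (κ ⊕ Unit) F M) (hγ : l.1.2.1 (Sum.inr ()) = 0) (x : κ → M) (y : M) :
    (Sum.elim x fun _ => y) ∈ litSet (Q : Set M) l ↔ x ∈ litSet (Q : Set M) (xlit l) := by
  rcases l with ⟨⟨k, c, b⟩, pol⟩
  simp only at hγ
  have hval : aff c b (Sum.elim x fun _ => y) = aff (c ∘ Sum.inl) b x := by
    rw [aff_elim, hγ, zero_smul, add_zero]
  cases k <;> cases pol <;>
    simp only [litSet, atomSet, xlit, Set.mem_setOf_eq, Set.mem_compl_iff, if_true, if_false,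
      Bool.false_eq_true, hval]

end AuxE
section AuxF
variable {F M : Type} [Field F] [LinearOrder F] [IsStrictOrderedRing F] [AddCommGroup M] [LinearOrder M] [IsOrderedAddMonoid M] [Module F M]
  [PosSMulStrictMono F M]
variable {κ : Type} [Fintype κ] [DecidableEq κ]
variable {Q : Submodule F M}

def xpart (cell : List (Lit (κ ⊕ Unit) F M)) : List (Lit κ F M) :=
  (cell.filter (fun l => decide (l.1.2.1 (Sum.inr ()) = 0))).map xlit

def cpart (cell : List (Lit (κ ⊕ Unit) F M)) : List (NT × (κ → F) × M) :=
  (cell.filter (fun l => !decide (l.1.2.1 (Sum.inr ()) = 0))).map normConstraint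

def substArgs (C : List (NT × (κ → F) × M)) : List ((κ → F) × M) :=
  C.filterMap (fun p => if p.1.subst then some p.2 else none)

def cmpLit (nt : NT) (t s : (κ → F) × M) : Lit κ F M :=
  match nt with
  | .lt => ((.l, t.1 - s.1, t.2 - s.2), true)
  | .le => ((.l, s.1 - t.1, s.2 - t.2), false)
  | .gt => ((.l, s.1 - t.1, s.2 - t.2), true)
  | .ge => ((.l, t.1 - s.1, t.2 - s.2), false)
  | .eq => ((.e, t.1 - s.1, t.2 - s.2), true)
  | .ne => ((.e, t.1 - s.1, t.2 - s.2), false)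
  | .inQ => ((.q, t.1 - s.1, t.2 - s.2), true)
  | .ninQ => ((.q, t.1 - s.1, t.2 - s.2), false)

lemma cmpLit_mem (nt : NT) (t s : (κ → F) × M) (x : κ → M) :
    x ∈ litSet (Q : Set M) (cmpLit nt t s) ↔
      holds Q (aff t.1 t.2 x) (nt, aff s.1 s.2 x) := by
  cases nt <;>
    simp only [cmpLit, litSet, atomSet, Set.mem_setOf_eq, Set.mem_compl_iff, if_true, if_false,
      Bool.false_eq_true, holds, aff_sub_eval]
  · exact sub_neg
  · rw [sub_neg]; exact not_lt
  · exact sub_neg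
  · rw [sub_neg]; exact not_lt
  · exact sub_eq_zero
  · rw [sub_eq_zero]
  · exact Iff.rfl
  · exact Iff.rfl

def pairLits (p q : NT × (κ → F) × M) : List (Lit κ F M) :=
  if (p.1 = NT.gt ∨ p.1 = NT.ge) ∧ (q.1 = NT.lt ∨ q.1 = NT.le) then
    [((.l, p.2.1 - q.2.1, p.2.2 - q.2.2), true)]
  else if p.1 = NT.inQ ∧ q.1 = NT.inQ then
    [((.q, p.2.1 - q.2.1, p.2.2 - q.2.2), true)]
  else if p.1 = NT.inQ ∧ q.1 = NT.ninQ then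
    [((.q, p.2.1 - q.2.1, p.2.2 - q.2.2), false)]
  else []

def projCell (cell : List (Lit (κ ⊕ Unit) F M)) : List (List (Lit κ F M)) :=
  ((substArgs (cpart cell)).map
    (fun t => xpart cell ++ (cpart cell).map (fun p => cmpLit p.1 t p.2))) ++
  (if (cpart cell).any (fun p => p.1 = NT.eq) then []
   else [xpart cell ++
     (cpart cell).flatMap (fun p => (cpart cell).flatMap (fun q => pairLits p q))])

lemma mem_substArgs {C : List (NT × (κ → F) × M)} {t : (κ → F) × M} :
    t ∈ substArgs C ↔ ∃ p ∈ C, p.1.subst = true ∧ p.2 = t := by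
  rw [substArgs, List.mem_filterMap]
  constructor
  · rintro ⟨p, hp, hv⟩
    by_cases h : p.1.subst
    · rw [if_pos h] at hv
      exact ⟨p, hp, h, Option.some_injective _ hv⟩
    · rw [if_neg h] at hv; exact absurd hv (by simp)
  · rintro ⟨p, hp, h, rfl⟩
    exact ⟨p, hp, if_pos h⟩

lemma stepA (cell : List (Lit (κ ⊕ Unit) F M)) (x : κ → M) (y : M) :
    (Sum.elim x fun _ => y) ∈ cellSet (Q : Set M) cell ↔
      (x ∈ cellSet (Q : Set M) (xpart cell) ∧
        ∀ p ∈ cpart cell, holds Q y (p.1, aff p.2.1 p.2.2 x)) := by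
  constructor
  · intro h
    constructor
    · intro l' hl'
      rw [xpart, List.mem_map] at hl'
      obtain ⟨l, hl, rfl⟩ := hl'
      rw [List.mem_filter] at hl
      exact (zero_bridge l (by simpa using hl.2) x y).1 (h l hl.1)
    · intro p hp
      rw [cpart, List.mem_map] at hp
      obtain ⟨l, hl, rfl⟩ := hp
      rw [List.mem_filter] at hl
      exact (norm_bridge l (by simpa using hl.2) x y).1 (h l hl.1)
  · rintro ⟨hx, hc⟩ l hl
    by_cases hγ : l.1.2.1 (Sum.inr ()) = 0
    · refine (zero_bridge l hγ x y).2 ?_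
      refine hx (xlit l) ?_
      rw [xpart, List.mem_map]
      exact ⟨l, List.mem_filter.2 ⟨hl, by simpa using hγ⟩, rfl⟩
    · refine (norm_bridge l hγ x y).2 ?_
      refine hc (normConstraint l) ?_
      rw [cpart, List.mem_map]
      exact ⟨l, List.mem_filter.2 ⟨hl, by simpa using hγ⟩, rfl⟩

lemma projCell_spec (one : M) (hone : (0 : M) < one)
    (hQproper : (Q : Set M) ≠ Set.univ)
    (hQdense : ∀ a b : M, a < b → ∃ q ∈ Q, a < q ∧ q < b)
    (cell : List (Lit (κ ⊕ Unit) F M)) (x : κ → M) :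
    x ∈ dnfSet (Q : Set M) (projCell cell) ↔
      ∃ y, (Sum.elim x fun _ => y) ∈ cellSet (Q : Set M) cell := by
  classical
  set C := cpart cell with hC
  have hiff : (∃ y, (Sum.elim x fun _ => y) ∈ cellSet (Q : Set M) cell) ↔
      (x ∈ cellSet (Q : Set M) (xpart cell) ∧
        ∃ y, ∀ p' ∈ C.map (fun p => (p.1, aff p.2.1 p.2.2 x)), holds Q y p') := by
    constructor
    · rintro ⟨y, hy⟩
      obtain ⟨h1, h2⟩ := (stepA cell x y).1 hy
      refine ⟨h1, y, ?_⟩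
      intro p' hp'
      rw [List.mem_map] at hp'
      obtain ⟨p, hp, rfl⟩ := hp'
      exact h2 p hp
    · rintro ⟨h1, y, h2⟩
      refine ⟨y, (stepA cell x y).2 ⟨h1, fun p hp => ?_⟩⟩
      exact h2 _ (List.mem_map_of_mem hp)
  rw [hiff, core_qe one hone hQproper hQdense]
  -- now translate both disjuncts
  constructor
  · intro hx
    rw [dnfSet, Set.mem_setOf_eq] at hx
    obtain ⟨cc, hcc, hcx⟩ := hx
    rw [projCell, List.mem_append] at hcc
    rcases hcc with hcc | hcc
    · -- subst disjunct
      rw [List.mem_map] at hcc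
      obtain ⟨t, ht, rfl⟩ := hcc
      rw [cellSet_append] at hcx
      obtain ⟨hc1, hc2⟩ := hcx
      obtain ⟨p₀, hp₀, hps₀, hpt⟩ := mem_substArgs.1 ht
      refine ⟨hc1, Or.inl ⟨(p₀.1, aff p₀.2.1 p₀.2.2 x), List.mem_map_of_mem hp₀, hps₀, ?_⟩⟩
      intro q' hq'
      rw [List.mem_map] at hq'
      obtain ⟨q, hq, rfl⟩ := hq'
      have := hc2 (cmpLit q.1 t q.2) (List.mem_map_of_mem hq)
      rw [cmpLit_mem] at this
      rw [← hpt] at this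
      exact this
    · -- generic disjunct
      by_cases hgen : ∃ p ∈ C, p.1 = NT.eq
      · obtain ⟨p, hp, hpe⟩ := hgen
        rw [if_pos (List.any_eq_true.2 ⟨p, hp, decide_eq_true hpe⟩)] at hcc
        exact absurd hcc (List.not_mem_nil)
      · rw [if_neg (fun hany => hgen (by
          obtain ⟨p, hp, hpe⟩ := List.any_eq_true.1 hany
          exact ⟨p, hp, of_decide_eq_true hpe⟩))] at hcc
        rw [List.mem_singleton] at hcc
        subst hcc
        rw [cellSet_append] at hcx
        obtain ⟨hc1, hc2⟩ := hcx
        refine ⟨hc1, Or.inr ⟨?_, ?_, ?_, ?_⟩⟩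
        · intro p' hp'
          rw [List.mem_map] at hp'
          obtain ⟨p, hp, rfl⟩ := hp'
          intro hpe
          exact hgen ⟨p, hp, hpe⟩
        · rintro p' hp' q' hq' hpk hqk
          rw [List.mem_map] at hp' hq'
          obtain ⟨p, hp, rfl⟩ := hp'
          obtain ⟨q, hq, rfl⟩ := hq'
          have := hc2 ((Knd.l, p.2.1 - q.2.1, p.2.2 - q.2.2), true)
            (by
              rw [List.mem_flatMap]
              refine ⟨p, hp, ?_⟩
              rw [List.mem_flatMap]
              refine ⟨q, hq, ?_⟩
              rw [pairLits, if_pos ⟨hpk, hqk⟩]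
              exact List.mem_singleton_self _)
          simp only [litSet, atomSet, if_true, Set.mem_setOf_eq, aff_sub_eval] at this
          exact sub_neg.1 this
        · rintro p' hp' q' hq' hpk hqk
          rw [List.mem_map] at hp' hq'
          obtain ⟨p, hp, rfl⟩ := hp'
          obtain ⟨q, hq, rfl⟩ := hq'
          have := hc2 ((Knd.q, p.2.1 - q.2.1, p.2.2 - q.2.2), true)
            (by
              rw [List.mem_flatMap]
              refine ⟨p, hp, ?_⟩
              rw [List.mem_flatMap]
              refine ⟨q, hq, ?_⟩
              have hne1 : ¬((p.1 = NT.gt ∨ p.1 = NT.ge) ∧ (q.1 = NT.lt ∨ q.1 = NT.le)) := by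
                rw [hpk, hqk]; rintro ⟨h | h, _⟩ <;> exact NT.noConfusion h
              rw [pairLits, if_neg hne1, if_pos ⟨hpk, hqk⟩]
              exact List.mem_singleton_self _)
          simp only [litSet, atomSet, if_true, Set.mem_setOf_eq, aff_sub_eval] at this
          exact this
        · rintro p' hp' q' hq' hpk hqk
          rw [List.mem_map] at hp' hq'
          obtain ⟨p, hp, rfl⟩ := hp'
          obtain ⟨q, hq, rfl⟩ := hq'
          have := hc2 ((Knd.q, p.2.1 - q.2.1, p.2.2 - q.2.2), false)
            (by
              rw [List.mem_flatMap]
              refine ⟨p, hp, ?_⟩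
              rw [List.mem_flatMap]
              refine ⟨q, hq, ?_⟩
              have hne1 : ¬((p.1 = NT.gt ∨ p.1 = NT.ge) ∧ (q.1 = NT.lt ∨ q.1 = NT.le)) := by
                rw [hpk, hqk]; rintro ⟨h | h, _⟩ <;> exact NT.noConfusion h
              have hne2 : ¬(p.1 = NT.inQ ∧ q.1 = NT.inQ) := by
                rw [hqk]; rintro ⟨_, h⟩; exact NT.noConfusion h
              rw [pairLits, if_neg hne1, if_neg hne2, if_pos ⟨hpk, hqk⟩]
              exact List.mem_singleton_self _)
          simp only [litSet, atomSet, if_false, Bool.false_eq_true, Set.mem_compl_iff,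
            Set.mem_setOf_eq, aff_sub_eval] at this
          exact this
  · rintro ⟨h1, hdisj⟩
    rw [dnfSet, Set.mem_setOf_eq]
    rcases hdisj with ⟨p', hp', hps', hall⟩ | ⟨hne, hord, hqq, hqn⟩
    · rw [List.mem_map] at hp'
      obtain ⟨p₀, hp₀, rfl⟩ := hp'
      refine ⟨xpart cell ++ C.map (fun p => cmpLit p.1 p₀.2 p.2), ?_, ?_⟩
      · rw [projCell, List.mem_append]
        exact Or.inl (List.mem_map_of_mem (mem_substArgs.2 ⟨p₀, hp₀, hps', rfl⟩))
      · rw [cellSet_append]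
        refine ⟨h1, ?_⟩
        intro l' hl'
        rw [List.mem_map] at hl'
        obtain ⟨q, hq, rfl⟩ := hl'
        rw [cmpLit_mem]
        exact hall _ (List.mem_map_of_mem hq)
    · refine ⟨xpart cell ++ C.flatMap (fun p => C.flatMap (fun q => pairLits p q)), ?_, ?_⟩
      · rw [projCell, List.mem_append]
        refine Or.inr ?_
        rw [if_neg (fun hany => by
          obtain ⟨p, hp, hpe⟩ := List.any_eq_true.1 hany
          exact hne _ (List.mem_map_of_mem hp) (of_decide_eq_true hpe))]
        exact List.mem_singleton_self _
      · rw [cellSet_append]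
        refine ⟨h1, ?_⟩
        intro l' hl'
        rw [List.mem_flatMap] at hl'
        obtain ⟨p, hp, hl'⟩ := hl'
        rw [List.mem_flatMap] at hl'
        obtain ⟨q, hq, hl'⟩ := hl'
        rw [pairLits] at hl'
        split_ifs at hl' with hc1 hc2 hc3
        · rw [List.mem_singleton] at hl'
          subst hl'
          simp only [litSet, atomSet, if_true, Set.mem_setOf_eq, aff_sub_eval]
          rw [sub_neg]
          exact hord _ (List.mem_map_of_mem hp) _ (List.mem_map_of_mem hq) hc1.1 hc1.2
        · rw [List.mem_singleton] at hl'
          subst hl'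
          simp only [litSet, atomSet, if_true, Set.mem_setOf_eq, aff_sub_eval]
          exact hqq _ (List.mem_map_of_mem hp) _ (List.mem_map_of_mem hq) hc2.1 hc2.2
        · rw [List.mem_singleton] at hl'
          subst hl'
          simp only [litSet, atomSet, if_false, Bool.false_eq_true, Set.mem_compl_iff,
            Set.mem_setOf_eq, aff_sub_eval]
          exact hqn _ (List.mem_map_of_mem hp) _ (List.mem_map_of_mem hq) hc3.1 hc3.2
        · exact absurd hl' (List.not_mem_nil)

end AuxF
section AuxG
open FirstOrder Language

variable {F M : Type} [Field F] [LinearOrder F] [IsStrictOrderedRing F] [AddCommGroup M] [LinearOrder M] [IsOrderedAddMonoid M] [Module F M]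
  [PosSMulStrictMono F M]
variable {ι : Type} [Fintype ι] [DecidableEq ι]
variable {Q : Submodule F M}

lemma aff_add_comb (c₁ c₂ : ι → F) (b₁ b₂ : M) (x : ι → M) :
    aff c₁ b₁ x + aff c₂ b₂ x = aff (c₁ + c₂) (b₁ + b₂) x := by
  unfold aff
  simp only [Pi.add_apply, add_smul, Finset.sum_add_distrib]
  abel

lemma aff_neg_comb (c : ι → F) (b : M) (x : ι → M) :
    -aff c b x = aff (-c) (-b) x := by
  unfold aff
  simp only [Pi.neg_apply, neg_smul, Finset.sum_neg_distrib]
  abel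

lemma aff_smul_comb (α : F) (c : ι → F) (b : M) (x : ι → M) :
    α • aff c b x = aff (fun i => α * c i) (α • b) x := by
  unfold aff
  rw [smul_add, Finset.smul_sum]
  congr 1
  exact Finset.sum_congr rfl fun i _ => by rw [mul_smul]

lemma aff_const (b : M) (x : ι → M) : aff (fun _ => (0 : F)) b x = b := by
  unfold aff
  simp

variable [inst : (LP F).Structure M]

lemma term_affine (A : Set M)
    (hadd : ∀ x : Fin 2 → M, Structure.funMap (L := LP F) LPFunc.add x = x 0 + x 1)
    (hneg : ∀ x : Fin 1 → M, Structure.funMap (L := LP F) LPFunc.neg x = -(x 0))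
    (hsm : ∀ (α : F) (x : Fin 1 → M), Structure.funMap (L := LP F) (LPFunc.smul α) x = α • x 0)
    (t : ((LP F)[[A]]).Term ι) :
    ∃ (c : ι → F) (b : M), ∀ x : ι → M, t.realize x = aff c b x := by
  induction t with
  | var i =>
      refine ⟨fun j => if j = i then 1 else 0, 0, fun x => ?_⟩
      rw [Term.realize_var]
      unfold aff
      simp [ite_smul]
  | @func l f ts ih =>
      rcases f with f | cst
      · cases f with
        | add =>
            obtain ⟨c₁, b₁, h₁⟩ := ih 0
            obtain ⟨c₂, b₂, h₂⟩ := ih 1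
            refine ⟨c₁ + c₂, b₁ + b₂, fun x => ?_⟩
            have : Term.realize x (Term.func (Sum.inl LPFunc.add) ts)
                = Structure.funMap (L := LP F) LPFunc.add (fun i => Term.realize x (ts i)) := rfl
            refine this.trans ?_
            rw [hadd]
            simp only [h₁, h₂]
            exact aff_add_comb c₁ c₂ b₁ b₂ x
        | neg =>
            obtain ⟨c₁, b₁, h₁⟩ := ih 0
            refine ⟨-c₁, -b₁, fun x => ?_⟩
            have : Term.realize x (Term.func (Sum.inl LPFunc.neg) ts)
                = Structure.funMap (L := LP F) LPFunc.neg (fun i => Term.realize x (ts i)) := rfl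
            refine this.trans ?_
            rw [hneg]
            simp only [h₁]
            exact aff_neg_comb c₁ b₁ x
        | zero =>
            refine ⟨fun _ => 0, Structure.funMap (L := LP F) LPFunc.zero default, fun x => ?_⟩
            have : Term.realize x (Term.func (Sum.inl LPFunc.zero) ts)
                = Structure.funMap (L := LP F) LPFunc.zero (fun i => Term.realize x (ts i)) := rfl
            refine this.trans ?_
            rw [aff_const]
            congr 1
            exact Subsingleton.elim _ _
        | one =>
            refine ⟨fun _ => 0, Structure.funMap (L := LP F) LPFunc.one default, fun x => ?_⟩
            have : Term.realize x (Term.func (Sum.inl LPFunc.one) ts)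
                = Structure.funMap (L := LP F) LPFunc.one (fun i => Term.realize x (ts i)) := rfl
            refine this.trans ?_
            rw [aff_const]
            congr 1
            exact Subsingleton.elim _ _
        | smul α =>
            obtain ⟨c₁, b₁, h₁⟩ := ih 0
            refine ⟨fun i => α * c₁ i, α • b₁, fun x => ?_⟩
            have : Term.realize x (Term.func (Sum.inl (LPFunc.smul α)) ts)
                = Structure.funMap (L := LP F) (LPFunc.smul α) (fun i => Term.realize x (ts i)) :=
              rfl
            refine this.trans ?_
            rw [hsm]
            simp only [h₁]
            exact aff_smul_comb α c₁ b₁ x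
      · -- constant from A
        match l, cst with
        | 0, cst =>
            refine ⟨fun _ => 0, (cst : M), fun x => ?_⟩
            rw [aff_const]
            rfl
  
end AuxG
section AuxH
open FirstOrder Language

variable {F M : Type} [Field F] [LinearOrder F] [IsStrictOrderedRing F] [AddCommGroup M] [LinearOrder M] [IsOrderedAddMonoid M] [Module F M]
  [PosSMulStrictMono F M]
variable {Q : Submodule F M}
variable [inst : (LP F).Structure M]

/-- the reindexing map for the quantifier case -/
def qmap (n k : ℕ) : (Fin n ⊕ Fin (k + 1)) → ((Fin n ⊕ Fin k) ⊕ Unit) :=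
  Sum.elim (fun i => Sum.inl (Sum.inl i))
    (fun j => Fin.lastCases (Sum.inr ()) (fun j' => Sum.inl (Sum.inr j')) j)

lemma projD_spec (one : M) (hone : (0 : M) < one)
    (hQproper : (Q : Set M) ≠ Set.univ)
    (hQdense : ∀ a b : M, a < b → ∃ q ∈ Q, a < q ∧ q < b)
    {κ : Type} [Fintype κ] [DecidableEq κ]
    (e : List (List (Lit (κ ⊕ Unit) F M))) (x : κ → M) :
    x ∈ dnfSet (Q : Set M) (e.flatMap projCell) ↔
      ∃ y, (Sum.elim x fun _ => y) ∈ dnfSet (Q : Set M) e := by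
  constructor
  · rintro ⟨cc, hcc, hx⟩
    rw [List.mem_flatMap] at hcc
    obtain ⟨cell, hcell, hcc⟩ := hcc
    obtain ⟨y, hy⟩ := (projCell_spec one hone hQproper hQdense cell x).1 ⟨cc, hcc, hx⟩
    exact ⟨y, cell, hcell, hy⟩
  · rintro ⟨y, cell, hcell, hy⟩
    obtain ⟨cc, hcc, hx⟩ := (projCell_spec one hone hQproper hQdense cell x).2 ⟨y, hy⟩
    exact ⟨cc, List.mem_flatMap.2 ⟨cell, hcell, hcc⟩, hx⟩

lemma formula_dnf (one : M) (hone : (0 : M) < one)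
    (hQproper : (Q : Set M) ≠ Set.univ)
    (hQdense : ∀ a b : M, a < b → ∃ q ∈ Q, a < q ∧ q < b)
    (hadd : ∀ x : Fin 2 → M, Structure.funMap (L := LP F) LPFunc.add x = x 0 + x 1)
    (hneg : ∀ x : Fin 1 → M, Structure.funMap (L := LP F) LPFunc.neg x = -(x 0))
    (hsm : ∀ (α : F) (x : Fin 1 → M), Structure.funMap (L := LP F) (LPFunc.smul α) x = α • x 0)
    (hltR : ∀ x : Fin 2 → M, Structure.RelMap (L := LP F) LPRel.lt x ↔ x 0 < x 1)
    (hqR : ∀ x : Fin 1 → M, Structure.RelMap (L := LP F) LPRel.q x ↔ x 0 ∈ Q)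
    (A : Set M) {n : ℕ} :
    ∀ {k : ℕ} (φ : ((LP F)[[A]]).BoundedFormula (Fin n) k),
      IsDNF F (Q : Set M)
        {x : Fin n ⊕ Fin k → M | φ.Realize (x ∘ Sum.inl) (x ∘ Sum.inr)} := by
  intro k φ
  induction φ with
  | @falsum k =>
      have h : {x : Fin n ⊕ Fin k → M |
          BoundedFormula.Realize (L := (LP F)[[A]])
            BoundedFormula.falsum (x ∘ Sum.inl) (x ∘ Sum.inr)} = ∅ := by
        ext x
        simp [BoundedFormula.Realize]
      rw [h]; exact isDNF_empty
  | @equal k t₁ t₂ =>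
      obtain ⟨c₁, b₁, h₁⟩ := term_affine A hadd hneg hsm t₁
      obtain ⟨c₂, b₂, h₂⟩ := term_affine A hadd hneg hsm t₂
      have : {x : Fin n ⊕ Fin k → M |
          BoundedFormula.Realize (BoundedFormula.equal t₁ t₂) (x ∘ Sum.inl) (x ∘ Sum.inr)}
          = atomSet (Q : Set M) Knd.e (c₁ - c₂) (b₁ - b₂) := by
        ext x
        have hx : Sum.elim (x ∘ Sum.inl) (x ∘ Sum.inr) = x := by
          funext j; cases j <;> rfl
        simp only [Set.mem_setOf_eq, BoundedFormula.Realize, hx, atomSet, h₁, h₂]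
        rw [aff_sub_eval', sub_eq_zero]
      rw [this]; exact isDNF_atom _ _ _
  | @rel k l R ts =>
      rcases R with R | R
      · cases R with
        | lt =>
            obtain ⟨c₁, b₁, h₁⟩ := term_affine A hadd hneg hsm (ts 0)
            obtain ⟨c₂, b₂, h₂⟩ := term_affine A hadd hneg hsm (ts 1)
            have : {x : Fin n ⊕ Fin k → M |
                BoundedFormula.Realize (BoundedFormula.rel (Sum.inl LPRel.lt) ts)
                  (x ∘ Sum.inl) (x ∘ Sum.inr)}
                = atomSet (Q : Set M) Knd.l (c₁ - c₂) (b₁ - b₂) := by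
              ext x
              have hx : Sum.elim (x ∘ Sum.inl) (x ∘ Sum.inr) = x := by
                funext j; cases j <;> rfl
              have hr : BoundedFormula.Realize (BoundedFormula.rel (Sum.inl LPRel.lt) ts)
                  (x ∘ Sum.inl) (x ∘ Sum.inr)
                  ↔ Structure.RelMap (L := LP F) LPRel.lt
                      (fun i => Term.realize (Sum.elim (x ∘ Sum.inl) (x ∘ Sum.inr)) (ts i)) :=
                Iff.rfl
              rw [Set.mem_setOf_eq, hr, hltR, hx]
              simp only [h₁, h₂, atomSet, Set.mem_setOf_eq]
              rw [aff_sub_eval', sub_neg]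
            exact Eq.mpr (congrArg (IsDNF F (Q : Set M)) this) (isDNF_atom _ _ _)
        | q =>
            obtain ⟨c₁, b₁, h₁⟩ := term_affine A hadd hneg hsm (ts 0)
            have : {x : Fin n ⊕ Fin k → M |
                BoundedFormula.Realize (BoundedFormula.rel (Sum.inl LPRel.q) ts)
                  (x ∘ Sum.inl) (x ∘ Sum.inr)}
                = atomSet (Q : Set M) Knd.q c₁ b₁ := by
              ext x
              have hx : Sum.elim (x ∘ Sum.inl) (x ∘ Sum.inr) = x := by
                funext j; cases j <;> rfl
              have hr : BoundedFormula.Realize (BoundedFormula.rel (Sum.inl LPRel.q) ts)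
                  (x ∘ Sum.inl) (x ∘ Sum.inr)
                  ↔ Structure.RelMap (L := LP F) LPRel.q
                      (fun i => Term.realize (Sum.elim (x ∘ Sum.inl) (x ∘ Sum.inr)) (ts i)) :=
                Iff.rfl
              rw [Set.mem_setOf_eq, hr, hqR, hx]
              simp only [h₁, atomSet, Set.mem_setOf_eq, SetLike.mem_coe]
            exact Eq.mpr (congrArg (IsDNF F (Q : Set M)) this) (isDNF_atom _ _ _)
      · exact Empty.elim R
  | @imp k φ ψ ih₁ ih₂ =>
      have : {x : Fin n ⊕ Fin k → M |
          BoundedFormula.Realize (φ.imp ψ) (x ∘ Sum.inl) (x ∘ Sum.inr)}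
          = {x | BoundedFormula.Realize φ (x ∘ Sum.inl) (x ∘ Sum.inr)}ᶜ
            ∪ {x | BoundedFormula.Realize ψ (x ∘ Sum.inl) (x ∘ Sum.inr)} := by
        ext x
        simp only [Set.mem_setOf_eq, BoundedFormula.realize_imp, Set.mem_union,
          Set.mem_compl_iff, Set.mem_setOf_eq]
        tauto
      rw [this]
      exact (ih₁.compl).union ih₂
  | @all k φ ih =>
      obtain ⟨d, hd⟩ := ih
      obtain ⟨d', hd'⟩ := isDNF_comp_map (Q := (Q : Set M)) (d := d) (qmap n k)
      obtain ⟨e, he⟩ := IsDNF.compl (Q := (Q : Set M)) ⟨d', rfl⟩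
      have key : {x : Fin n ⊕ Fin k → M |
          BoundedFormula.Realize φ.all (x ∘ Sum.inl) (x ∘ Sum.inr)}
          = (dnfSet (Q : Set M) (e.flatMap projCell))ᶜ := by
        ext x
        rw [Set.mem_setOf_eq, BoundedFormula.realize_all, Set.mem_compl_iff,
          projD_spec one hone hQproper hQdense, not_exists]
        refine forall_congr' fun y => ?_
        have h1 : ((Sum.elim x fun _ => y) ∘ qmap n k) ∘ Sum.inl = x ∘ Sum.inl := by
          funext i; rfl
        have h2 : ((Sum.elim x fun _ => y) ∘ qmap n k) ∘ Sum.inr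
            = Fin.snoc (x ∘ Sum.inr) y := by
          funext j
          refine Fin.lastCases ?_ (fun j' => ?_) j
          · simp only [Function.comp_apply, qmap, Sum.elim_inr, Fin.lastCases_last,
              Fin.snoc_last]
          · simp only [Function.comp_apply, qmap, Sum.elim_inr, Fin.lastCases_castSucc,
              Fin.snoc_castSucc, Sum.elim_inl]
        have m1 : ((Sum.elim x fun _ => y) ∘ qmap n k) ∈ dnfSet (Q : Set M) d
            ↔ BoundedFormula.Realize φ (x ∘ Sum.inl) (Fin.snoc (x ∘ Sum.inr) y) := by
          rw [← hd, Set.mem_setOf_eq, h1, h2]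
        have m2 : (Sum.elim x fun _ => y) ∈ dnfSet (Q : Set M) d'
            ↔ ((Sum.elim x fun _ => y) ∘ qmap n k) ∈ dnfSet (Q : Set M) d := by
          rw [← hd']
          exact Iff.rfl
        have m3 : (Sum.elim x fun _ => y) ∈ dnfSet (Q : Set M) e
            ↔ ¬ BoundedFormula.Realize φ (x ∘ Sum.inl) (Fin.snoc (x ∘ Sum.inr) y) := by
          rw [← he, Set.mem_compl_iff, m2, m1]
        rw [m3, not_not]
      rw [key]
      exact IsDNF.compl ⟨_, rfl⟩

end AuxH
section AuxI
variable {F M : Type} [Field F] [LinearOrder F] [IsStrictOrderedRing F] [AddCommGroup M] [LinearOrder M] [IsOrderedAddMonoid M] [Module F M]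
  [PosSMulStrictMono F M]
variable {n : ℕ}
variable {Q : Submodule F M}

lemma abs_smul_nonneg' {c : F} (hc : 0 ≤ c) (m : M) : |c • m| = c • |m| := by
  rcases le_or_gt 0 m with hm | hm
  · rw [abs_of_nonneg hm, abs_of_nonneg (smul_nonneg hc hm)]
  · have h1 : 0 ≤ c • (-m) := smul_nonneg hc (neg_nonneg.2 hm.le)
    rw [smul_neg] at h1
    rw [abs_of_neg hm, abs_of_nonpos (neg_nonneg.1 h1), smul_neg]

lemma abs_smul' (c : F) (m : M) : |c • m| = |c| • |m| := by
  rcases le_or_gt 0 c with hc | hc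
  · rw [abs_of_nonneg hc, abs_smul_nonneg' hc]
  · rw [abs_of_neg hc, ← abs_neg (c • m), ← neg_smul]
    exact abs_smul_nonneg' (neg_nonneg.2 hc.le) m

lemma aff_diff_eq (c : Fin n → F) (b : M) (w z : Fin n → M) :
    aff c b w - aff c b z = ∑ i, c i • (w i - z i) := by
  unfold aff
  rw [Finset.sum_congr rfl fun i _ => smul_sub (c i) (w i) (z i), Finset.sum_sub_distrib]
  abel

lemma aff_diff_bound (c : Fin n → F) (b : M) (w z : Fin n → M) (δ : M)
    (h : ∀ i, |w i - z i| ≤ δ) :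
    |aff c b w - aff c b z| ≤ (∑ i, |c i|) • δ := by
  rw [aff_diff_eq]
  refine le_trans (Finset.abs_sum_le_sum_abs _ _) ?_
  rw [Finset.sum_smul]
  refine Finset.sum_le_sum fun i _ => ?_
  rw [abs_smul']
  exact smul_le_smul_of_nonneg_left (h i) (abs_nonneg _)

lemma exists_box_point (hQdense : ∀ a b : M, a < b → ∃ q ∈ Q, a < q ∧ q < b)
    (u v : Fin n → M) (huv : ∀ i, u i < v i) :
    ∃ z : Fin n → M, ∀ i, u i < z i ∧ z i < v i := by
  choose z _ h1 h2 using fun i => hQdense (u i) (v i) (huv i)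
  exact ⟨z, fun i => ⟨h1 i, h2 i⟩⟩

lemma const_sign_box (one : M) (hone : (0 : M) < one)
    (hQdense : ∀ a b : M, a < b → ∃ q ∈ Q, a < q ∧ q < b)
    (Λ : List ((Fin n → F) × M)) (hΛ : ∀ p ∈ Λ, p.1 ≠ 0) :
    ∃ u v : Fin n → M, (∀ i, u i < v i) ∧ ∀ p ∈ Λ,
      (∀ w : Fin n → M, (∀ i, u i < w i ∧ w i < v i) → 0 < aff p.1 p.2 w) ∨
      (∀ w : Fin n → M, (∀ i, u i < w i ∧ w i < v i) → aff p.1 p.2 w < 0) := by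
  classical
  induction Λ with
  | nil => exact ⟨fun _ => 0, fun _ => one, fun _ => hone,
      fun p hp => absurd hp (List.not_mem_nil)⟩
  | cons p Λ ih =>
      obtain ⟨u, v, huv, hsign⟩ := ih (fun p' hp' => hΛ p' (List.mem_cons_of_mem _ hp'))
      have hp1 : p.1 ≠ 0 := hΛ p (List.mem_cons_self)
      obtain ⟨i₀, hi₀⟩ := Function.ne_iff.1 hp1
      haveI : Nonempty (Fin n) := ⟨i₀⟩
      -- a point in the box where p is nonzero
      have hzex : ∃ z : Fin n → M, (∀ i, u i < z i ∧ z i < v i) ∧ aff p.1 p.2 z ≠ 0 := by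
        obtain ⟨z, hz⟩ := exists_box_point hQdense u v huv
        by_cases hz0 : aff p.1 p.2 z = 0
        · obtain ⟨w₀, _, hw₀1, hw₀2⟩ := hQdense (z i₀) (v i₀) (hz i₀).2
          refine ⟨Function.update z i₀ w₀, fun i => ?_, ?_⟩
          · by_cases hi : i = i₀
            · subst hi
              rw [Function.update_self]
              exact ⟨lt_trans (hz i).1 hw₀1, hw₀2⟩
            · rw [Function.update_of_ne hi]
              exact hz i
          · have hdiff : aff p.1 p.2 (Function.update z i₀ w₀) - aff p.1 p.2 z
                = p.1 i₀ • (w₀ - z i₀) := by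
              rw [aff_diff_eq, Finset.sum_eq_single i₀]
              · rw [Function.update_self]
              · intro i _ hi
                rw [Function.update_of_ne hi, sub_self, smul_zero]
              · intro h; exact absurd (Finset.mem_univ i₀) h
            rw [hz0, sub_zero] at hdiff
            rw [hdiff]
            intro hcon
            have h2 := (smul_eq_zero_iff' hi₀ _).1 hcon
            rw [sub_eq_zero] at h2
            exact absurd h2.symm (ne_of_lt hw₀1)
        · exact ⟨z, hz, hz0⟩
      obtain ⟨z, hzbox, hz0⟩ := hzex
      set A := aff p.1 p.2 z with hA
      have habs : 0 < |A| := abs_pos.2 hz0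
      set K : F := ∑ i, |p.1 i| with hK
      have hKpos : 0 < K :=
        Finset.sum_pos' (fun i _ => abs_nonneg _) ⟨i₀, Finset.mem_univ _, abs_pos.2 hi₀⟩
      set δ₁ : M := (2 * K)⁻¹ • |A| with hδ₁
      have hδ₁pos : 0 < δ₁ := smul_pos (inv_pos.2 (by positivity)) habs
      set m : M := min δ₁ (Finset.univ.inf' Finset.univ_nonempty
        (fun i => min (z i - u i) (v i - z i))) with hm
      have hmpos : 0 < m := by
        rw [hm, lt_min_iff]
        refine ⟨hδ₁pos, ?_⟩
        rw [Finset.lt_inf'_iff]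
        intro i _
        rw [lt_min_iff]
        exact ⟨sub_pos.2 (hzbox i).1, sub_pos.2 (hzbox i).2⟩
      have hmδ : m ≤ δ₁ := min_le_left _ _
      have hmarg : ∀ i, m ≤ z i - u i ∧ m ≤ v i - z i := by
        intro i
        have h1 := min_le_right δ₁ (Finset.univ.inf' Finset.univ_nonempty
          (fun i => min (z i - u i) (v i - z i)))
        have h2 := Finset.inf'_le (fun i => min (z i - u i) (v i - z i)) (Finset.mem_univ i)
        rw [← hm] at h1
        constructor
        · exact le_trans (le_trans h1 h2) (min_le_left _ _)
        · exact le_trans (le_trans h1 h2) (min_le_right _ _)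
      have hsub : ∀ w : Fin n → M, (∀ i, z i - m < w i ∧ w i < z i + m) →
          ∀ i, u i < w i ∧ w i < v i := by
        intro w hw i
        constructor
        · have : u i ≤ z i - m := by
            rw [le_sub_iff_add_le, add_comm, ← le_sub_iff_add_le]
            exact (hmarg i).1
          exact lt_of_le_of_lt this (hw i).1
        · have : z i + m ≤ v i := by
            rw [← le_sub_iff_add_le']
            exact (hmarg i).2
          exact lt_of_lt_of_le (hw i).2 this
      have hclose : ∀ w : Fin n → M, (∀ i, z i - m < w i ∧ w i < z i + m) →
          |aff p.1 p.2 w - A| < |A| := by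
        intro w hw
        have hb : ∀ i, |w i - z i| ≤ m := by
          intro i
          rw [abs_le]
          constructor
          · rw [neg_le, neg_sub, sub_le_iff_le_add]
            have h7 := sub_lt_iff_lt_add.1 (hw i).1
            rw [add_comm] at h7
            exact h7.le
          · rw [sub_le_iff_le_add]
            have h7 := (hw i).2
            rw [add_comm] at h7
            exact h7.le
        have h1 : |aff p.1 p.2 w - A| ≤ K • m := by
          rw [hA, hK]
          exact aff_diff_bound p.1 p.2 w z m hb
        have h2 : K • m ≤ K • δ₁ := smul_le_smul_of_nonneg_left hmδ hKpos.le
        have h3 : K • δ₁ = (2 : F)⁻¹ • |A| := by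
          rw [hδ₁, smul_smul]
          congr 1
          field_simp
        have h4 : (2 : F)⁻¹ • |A| < |A| := by
          have h5 : |A| = (2 : F)⁻¹ • |A| + (2 : F)⁻¹ • |A| := by
            rw [← add_smul]
            norm_num
          have h6 : 0 < (2 : F)⁻¹ • |A| := smul_pos (by norm_num) habs
          calc (2 : F)⁻¹ • |A| < (2 : F)⁻¹ • |A| + (2 : F)⁻¹ • |A| :=
                lt_add_of_pos_right _ h6
            _ = |A| := h5.symm
        calc |aff p.1 p.2 w - A| ≤ K • m := h1
          _ ≤ K • δ₁ := h2
          _ = (2 : F)⁻¹ • |A| := h3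
          _ < |A| := h4
      refine ⟨fun i => z i - m, fun i => z i + m, fun i =>
        lt_trans (sub_lt_self _ hmpos) (lt_add_of_pos_right _ hmpos), ?_⟩
      intro p' hp'
      rcases List.mem_cons.1 hp' with rfl | hp'
      · -- the new functional
        rcases hz0.lt_or_gt with hneg | hpos
        · refine Or.inr fun w hw => ?_
          have h1 := (abs_lt.1 (hclose w hw)).2
          rw [abs_of_neg hneg] at h1
          have := add_lt_add_left h1 A
          rwa [sub_add_cancel, neg_add_cancel] at this
        · refine Or.inl fun w hw => ?_
          have h1 := (abs_lt.1 (hclose w hw)).1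
          rw [abs_of_pos hpos] at h1
          have := add_lt_add_left h1 A
          rwa [sub_add_cancel, neg_add_cancel] at this
      · rcases hsign p' hp' with h | h
        · exact Or.inl fun w hw => h w (hsub w hw)
        · exact Or.inr fun w hw => h w (hsub w hw)

end AuxI
section AuxJ
variable {F M : Type} [Field F] [LinearOrder F] [IsStrictOrderedRing F] [AddCommGroup M] [LinearOrder M] [IsOrderedAddMonoid M] [Module F M]
  [PosSMulStrictMono F M]
variable {n : ℕ} {Q : Submodule F M}

lemma aff_zero_coeff (b : M) (y : Fin n → M) : aff (0 : Fin n → F) b y = b := by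
  unfold aff
  simp

lemma aff_shift (c : Fin n → F) (b : M) (x q : Fin n → M) :
    aff c b (fun i => x i + q i) = aff c b x + ∑ i, c i • q i := by
  unfold aff
  simp only [smul_add, Finset.sum_add_distrib]
  abel

lemma dnf_invariant_transfer (one : M) (hone : (0 : M) < one)
    (hQdense : ∀ a b : M, a < b → ∃ q ∈ Q, a < q ∧ q < b)
    (d : List (List (Lit (Fin n) F M)))
    (hinv : ∀ x ∈ dnfSet (Q : Set M) d, ∀ q : Fin n → M, (∀ i, q i ∈ Q) →
      (fun i => x i + q i) ∈ dnfSet (Q : Set M) d)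
    (x x' : Fin n → M) (hx : x ∈ dnfSet (Q : Set M) d)
    (hagree : ∀ cell ∈ d, ∀ l ∈ cell,
      (aff l.1.2.1 l.1.2.2 x ∈ Q ↔ aff l.1.2.1 l.1.2.2 x' ∈ Q)) :
    x' ∈ dnfSet (Q : Set M) d := by
  classical
  set Λ : List ((Fin n → F) × M) := ((d.flatMap id).map (fun l => l.1.2)).filter
    (fun p => !decide (p.1 = 0)) with hΛ
  obtain ⟨u, v, huv, hsign⟩ := const_sign_box one hone hQdense Λ (fun p hp => by
    rw [hΛ, List.mem_filter] at hp
    simpa using hp.2)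
  have hgetq : ∀ x₀ : Fin n → M, ∃ q : Fin n → M, (∀ i, q i ∈ Q) ∧
      ∀ i, u i < x₀ i + q i ∧ x₀ i + q i < v i := by
    intro x₀
    choose q hqQ h1 h2 using fun i => hQdense (u i - x₀ i) (v i - x₀ i)
      (sub_lt_sub_right (huv i) _)
    refine ⟨q, hqQ, fun i => ⟨?_, ?_⟩⟩
    · have := sub_lt_iff_lt_add.1 (h1 i)
      rwa [add_comm] at this
    · have := lt_sub_iff_add_lt.1 (h2 i)
      rwa [add_comm] at this
  obtain ⟨q, hqQ, hqbox⟩ := hgetq x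
  obtain ⟨q', hq'Q, hq'box⟩ := hgetq x'
  set w : Fin n → M := fun i => x i + q i with hwdef
  set w' : Fin n → M := fun i => x' i + q' i with hw'def
  have hw : w ∈ dnfSet (Q : Set M) d := hinv x hx q hqQ
  have hlit : ∀ cell ∈ d, ∀ l ∈ cell,
      (w ∈ litSet (Q : Set M) l ↔ w' ∈ litSet (Q : Set M) l) := by
    rintro cell hcell ⟨⟨k, c, b⟩, pol⟩ hl
    have hatom : w ∈ atomSet (Q : Set M) k c b ↔ w' ∈ atomSet (Q : Set M) k c b := by
      have hshift : aff c b w = aff c b x + ∑ i, c i • q i := aff_shift c b x q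
      have hshift' : aff c b w' = aff c b x' + ∑ i, c i • q' i := aff_shift c b x' q'
      cases k with
      | q =>
          have hs : (∑ i, c i • q i) ∈ Q := Submodule.sum_mem _ fun i _ => Q.smul_mem _ (hqQ i)
          have hs' : (∑ i, c i • q' i) ∈ Q :=
            Submodule.sum_mem _ fun i _ => Q.smul_mem _ (hq'Q i)
          have e1 : aff c b w ∈ Q ↔ aff c b x ∈ Q := by
            rw [hshift]
            constructor
            · intro h
              have := Q.sub_mem h hs
              rwa [add_sub_cancel_right] at this
            · intro h; exact Q.add_mem h hs
          have e2 : aff c b w' ∈ Q ↔ aff c b x' ∈ Q := by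
            rw [hshift']
            constructor
            · intro h
              have := Q.sub_mem h hs'
              rwa [add_sub_cancel_right] at this
            · intro h; exact Q.add_mem h hs'
          simp only [atomSet, Set.mem_setOf_eq, SetLike.mem_coe]
          rw [e1, e2]
          exact hagree cell hcell _ hl
      | e =>
          by_cases hc : c = 0
          · subst hc
            simp only [atomSet, Set.mem_setOf_eq, aff_zero_coeff]
          · have hmem : (c, b) ∈ Λ := by
              rw [hΛ, List.mem_filter]
              constructor
              · exact List.mem_map_of_mem (List.mem_flatMap.2 ⟨cell, hcell, show _ ∈ id cell from hl⟩)
              · simpa using hc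
            rcases hsign (c, b) hmem with h | h
            · simp only [atomSet, Set.mem_setOf_eq]
              constructor
              · intro hcon
                exact absurd hcon.symm (ne_of_lt (h w hqbox))
              · intro hcon
                exact absurd hcon.symm (ne_of_lt (h w' hq'box))
            · simp only [atomSet, Set.mem_setOf_eq]
              constructor
              · intro hcon
                exact absurd hcon (ne_of_lt (h w hqbox))
              · intro hcon
                exact absurd hcon (ne_of_lt (h w' hq'box))
      | l =>
          by_cases hc : c = 0
          · subst hc
            simp only [atomSet, Set.mem_setOf_eq, aff_zero_coeff]
          · have hmem : (c, b) ∈ Λ := by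
              rw [hΛ, List.mem_filter]
              constructor
              · exact List.mem_map_of_mem (List.mem_flatMap.2 ⟨cell, hcell, show _ ∈ id cell from hl⟩)
              · simpa using hc
            rcases hsign (c, b) hmem with h | h
            · simp only [atomSet, Set.mem_setOf_eq]
              constructor
              · intro hcon
                exact absurd hcon (asymm (h w hqbox))
              · intro hcon
                exact absurd hcon (asymm (h w' hq'box))
            · simp only [atomSet, Set.mem_setOf_eq]
              exact ⟨fun _ => h w' hq'box, fun _ => h w hqbox⟩
    cases pol
    · simp only [litSet, Bool.false_eq_true, if_false, Set.mem_compl_iff]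
      exact not_congr hatom
    · simp only [litSet, if_true]
      exact hatom
  have hw' : w' ∈ dnfSet (Q : Set M) d := by
    obtain ⟨cell, hcell, hc⟩ := hw
    exact ⟨cell, hcell, fun l hl => (hlit cell hcell l hl).1 (hc l hl)⟩
  have hfinal := hinv w' hw' (fun i => -q' i) (fun i => Q.neg_mem (hq'Q i))
  have : (fun i => w' i + -q' i) = x' := by
    funext i
    rw [hw'def]
    simp
  rwa [this] at hfinal

end AuxJ
section AuxK

lemma BoolComb.empty' {α : Type} (B : Set (Set α)) : BoolComb B (∅ : Set α) := by
  have h : (∅ : Set α) = (Set.univ : Set α)ᶜ := by simp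
  rw [h]
  exact BoolComb.compl BoolComb.univ

lemma BoolComb.union' {α : Type} {B : Set (Set α)} {s t : Set α}
    (hs : BoolComb B s) (ht : BoolComb B t) : BoolComb B (s ∪ t) := by
  have h : s ∪ t = (sᶜ ∩ tᶜ)ᶜ := by rw [Set.compl_inter]; simp
  rw [h]
  exact BoolComb.compl (BoolComb.inter hs.compl ht.compl)

lemma BoolComb.biUnion' {α β : Type} {B : Set (Set α)} (I : Finset β) (f : β → Set α)
    (h : ∀ i ∈ I, BoolComb B (f i)) : BoolComb B (⋃ i ∈ I, f i) := by
  classical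
  induction I using Finset.induction_on with
  | empty => simpa using BoolComb.empty' B
  | @insert a I hni ih =>
      rw [Finset.set_biUnion_insert]
      exact (h _ (Finset.mem_insert_self _ _)).union'
        (ih fun i hi => h i (Finset.mem_insert_of_mem hi))

lemma BoolComb.biInter' {α β : Type} {B : Set (Set α)} (I : Finset β) (f : β → Set α)
    (h : ∀ i ∈ I, BoolComb B (f i)) : BoolComb B (⋂ i ∈ I, f i) := by
  classical
  induction I using Finset.induction_on with
  | empty => simpa using BoolComb.univ
  | @insert a I hni ih =>
      rw [Finset.set_biInter_insert]
      exact (h _ (Finset.mem_insert_self _ _)).inter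
        (ih fun i hi => h i (Finset.mem_insert_of_mem hi))

end AuxK

theorem statement5'
    {F M : Type} [Field F] [LinearOrder F] [IsStrictOrderedRing F] [AddCommGroup M] [LinearOrder M] [IsOrderedAddMonoid M] [Module F M]
    (hsmul : ∀ (c : F) (x : M), 0 < c → 0 < x → 0 < c • x)
    (one : M) (hone : 0 < one)
    (Q : Submodule F M) (hQproper : (Q : Set M) ≠ Set.univ) (honeQ : one ∈ Q)
    (hQdense : ∀ a b : M, a < b → ∃ q ∈ Q, a < q ∧ q < b)
    (n : ℕ) (S : Set (Fin n → M)) (hS : POVSDefinable F M one (Q : Set M) S)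
    (hinv : ∀ x ∈ S, ∀ q : Fin n → M, (∀ i, q i ∈ Q) → (fun i => x i + q i) ∈ S) :
    BoolComb {T : Set (Fin n → M) | ∃ (c : Fin n → F) (b : M),
        T = {x | (∑ i, c i • x i) + b ∈ Q}} S := by
  classical
  haveI : PosSMulStrictMono F M := by
    constructor
    intro c hc a b hab
    have h := hsmul c (b - a) hc (sub_pos.2 hab)
    rw [smul_sub] at h
    exact sub_pos.1 h
  letI inst : (LP F).Structure M := LPStruc F M one (Q : Set M)
  obtain ⟨φ, hφ⟩ := hS
  have hdnf := formula_dnf (Q := Q) one hone hQproper hQdense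
    (fun x => rfl) (fun x => rfl) (fun α x => rfl) (fun x => Iff.rfl) (fun x => Iff.rfl)
    (Set.univ : Set M) (n := n) (k := 0) φ
  obtain ⟨d0, hd0⟩ := hdnf
  have hr0 := isDNF_comp_map (Q := (Q : Set M)) (d := d0)
    (Sum.elim id (fun j => Fin.elim0 j) : Fin n ⊕ Fin 0 → Fin n)
  obtain ⟨d, hd⟩ := hr0
  have hSd : S = dnfSet (Q : Set M) d := by
    rw [← hd, hφ]
    ext x
    rw [Set.mem_setOf_eq, Set.mem_setOf_eq, ← hd0]
    rw [Set.mem_setOf_eq]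
    have h1 : (x ∘ (Sum.elim id (fun j => Fin.elim0 j) : Fin n ⊕ Fin 0 → Fin n)) ∘ Sum.inl
        = x := by funext i; rfl
    have h2 : (x ∘ (Sum.elim id (fun j => Fin.elim0 j) : Fin n ⊕ Fin 0 → Fin n)) ∘ Sum.inr
        = (default : Fin 0 → M) := Subsingleton.elim _ _
    rw [h1, h2]
    exact Iff.rfl
  set L : List ((Fin n → F) × M) := (d.flatMap id).map (fun l => l.1.2) with hL
  set pat : (Fin n → M) → (Fin L.length → Bool) :=
    fun x i => decide (aff (L.get i).1 (L.get i).2 x ∈ Q) with hpat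
  have hagree_of_pat : ∀ x x' : Fin n → M, pat x = pat x' → ∀ cell ∈ d, ∀ l ∈ cell,
      (aff l.1.2.1 l.1.2.2 x ∈ Q ↔ aff l.1.2.1 l.1.2.2 x' ∈ Q) := by
    intro x x' hp cell hcell l hl
    have hmem : l.1.2 ∈ L :=
      List.mem_map_of_mem (List.mem_flatMap.2 ⟨cell, hcell, show _ ∈ id cell from hl⟩)
    obtain ⟨i, hi⟩ := List.mem_iff_get.1 hmem
    have hpi := congrFun hp i
    rw [hpat] at hpi
    simp only at hpi
    rw [hi] at hpi
    exact decide_eq_decide.1 hpi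
  have hinv' : ∀ a ∈ dnfSet (Q : Set M) d, ∀ qq : Fin n → M, (∀ i, qq i ∈ Q) →
      (fun i => a i + qq i) ∈ dnfSet (Q : Set M) d := by
    rw [← hSd]
    exact hinv
  have hT : (pat '' S).Finite := Set.toFinite _
  have hSun : S = ⋃ σ ∈ hT.toFinset, {x : Fin n → M | pat x = σ} := by
    ext x
    simp only [Set.mem_iUnion, Set.Finite.mem_toFinset, Set.mem_image, Set.mem_setOf_eq]
    constructor
    · intro hx
      exact ⟨pat x, ⟨x, hx, rfl⟩, rfl⟩
    · rintro ⟨σ, ⟨x₀, hx₀, rfl⟩, hpx⟩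
      rw [hSd]
      rw [hSd] at hx₀
      exact dnf_invariant_transfer one hone hQdense d hinv' x₀ x hx₀
        (hagree_of_pat x₀ x hpx.symm)
  have hclass : ∀ σ : Fin L.length → Bool,
      BoolComb {T : Set (Fin n → M) | ∃ (c : Fin n → F) (b : M),
        T = {x | (∑ i, c i • x i) + b ∈ Q}} {x : Fin n → M | pat x = σ} := by
    intro σ
    have h : {x : Fin n → M | pat x = σ}
        = ⋂ i ∈ (Finset.univ : Finset (Fin L.length)), {x : Fin n → M | pat x i = σ i} := by
      ext x
      simp only [Set.mem_setOf_eq, Set.mem_iInter, Finset.mem_univ, forall_const]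
      exact funext_iff
    rw [h]
    refine BoolComb.biInter' _ _ fun i _ => ?_
    rcases hσ : σ i with _ | _
    · have h2 : {x : Fin n → M | pat x i = false}
          = {x : Fin n → M | (∑ j, (L.get i).1 j • x j) + (L.get i).2 ∈ Q}ᶜ := by
        ext x
        simp only [hpat, Set.mem_setOf_eq, Set.mem_compl_iff, decide_eq_false_iff_not, aff]
        exact decide_eq_false_iff_not
      rw [h2]
      exact BoolComb.compl (BoolComb.basic ⟨_, _, rfl⟩)
    · have h2 : {x : Fin n → M | pat x i = true}
          = {x : Fin n → M | (∑ j, (L.get i).1 j • x j) + (L.get i).2 ∈ Q} := by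
        ext x
        simp only [hpat, Set.mem_setOf_eq, decide_eq_true_eq, aff]
        exact decide_eq_true_iff
      rw [h2]
      exact BoolComb.basic ⟨_, _, rfl⟩
  rw [hSun]
  exact BoolComb.biUnion' _ _ fun σ _ => hclass σ

/-- If `S ⊆ Mⁿ` is definable and invariant under coordinatewise
translation by `Q`, then `S` is a finite Boolean combination of sets of the form
`{x | c₁•x₁ + ⋯ + cₙ•xₙ + b ∈ Q}` (the quotient sort is a pure `F`-vector space). -/
theorem statement5
    (hsmul : ∀ (c : F) (x : M), 0 < c → 0 < x → 0 < c • x)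
    (one : M) (hone : 0 < one)
    (Q : Submodule F M) (hQproper : (Q : Set M) ≠ Set.univ) (honeQ : one ∈ Q)
    (hQdense : ∀ a b : M, a < b → ∃ q ∈ Q, a < q ∧ q < b)
    (n : ℕ) (S : Set (Fin n → M)) (hS : POVSDefinable F M one (Q : Set M) S)
    (hinv : ∀ x ∈ S, ∀ q : Fin n → M, (∀ i, q i ∈ Q) → (fun i => x i + q i) ∈ S) :
    BoolComb {T : Set (Fin n → M) | ∃ (c : Fin n → F) (b : M),
        T = {x | (∑ i, c i • x i) + b ∈ Q}} S := by
  exact statement5' hsmul one hone Q hQproper honeQ hQdense n S hS hinv
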